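/- Let ι be a fixed-point-free involution of {1,…,2n} and let S = {ι' ∈ A : ι ⪯ ι'}. Then ι is the greatest lower bound of S in the poset of fixed-point-free involutions of {1,…,2n} under the opposite Bruhat order ⪯; that is, ι ⪯ ι' for every ι' ∈ S, and every fixed-point-free involution τ with τ ⪯ ι' for all ι' ∈ S satisfies τ ⪯ ι. In particular, A contains the basic elements of this poset. -/

import Mathlib

/-- A fixed-point-free involution. -/
def isFPF {m : ℕ} (ι : Equiv.Perm (Fin m)) : Prop :=
  ι * ι = 1 ∧ ∀ i, ι i ≠ i

/-- The rank matrix entry `r_{ij}(π) = #{k ≤ i : π(k) ≤ j}` (0-based indices: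
`rkm π i j` is the 1-based entry `r_{i+1, j+1}`). -/
def rkm {m : ℕ} (π : Equiv.Perm (Fin m)) (i j : Fin m) : ℕ :=
  Finset.card (Finset.univ.filter fun k : Fin m => k ≤ i ∧ π k ≤ j)

/-- The opposite Bruhat order: `ι ⪯ ι'` iff `r_{ij}(ι) ≤ r_{ij}(ι')` for all `i, j`. -/
def oppLE {m : ℕ} (ι ι' : Equiv.Perm (Fin m)) : Prop :=
  ∀ i j, rkm ι i j ≤ rkm ι' i j

/-- `(i,j)` is a cell of the symplectic diagram of `ι`: a Rothe diagram cell with `i < j`. -/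
def inSympDiag {m : ℕ} (ι : Equiv.Perm (Fin m)) (i j : Fin m) : Prop :=
  i < j ∧ j < ι i ∧ i < ι⁻¹ j

/-- A symplectic essential box: a symplectic diagram cell with no symplectic diagram
cell immediately south or east of it. -/
def sympEssBox {m : ℕ} (ι : Equiv.Perm (Fin m)) (i j : Fin m) : Prop :=
  inSympDiag ι i j ∧
  (∀ h : i.val + 1 < m, ¬ inSympDiag ι ⟨i.val + 1, h⟩ j) ∧
  (∀ h : j.val + 1 < m, ¬ inSympDiag ι i ⟨j.val + 1, h⟩)

namespace BasicAux

/-- natural-number indexed rank matrix -/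
def Rk {m : ℕ} (σ : Equiv.Perm (Fin m)) (a b : ℕ) : ℕ :=
  Finset.card (Finset.univ.filter fun k : Fin m => k.val ≤ a ∧ (σ k).val ≤ b)

variable {m : ℕ}

lemma rkm_eq_Rk (σ : Equiv.Perm (Fin m)) (i j : Fin m) : rkm σ i j = Rk σ i.val j.val := rfl

lemma fpf_inv_eq {σ : Equiv.Perm (Fin m)} (h : isFPF σ) : σ⁻¹ = σ := by
  have := h.1
  rw [mul_eq_one_iff_inv_eq] at this
  exact this

lemma invol_apply {σ : Equiv.Perm (Fin m)} (h : σ⁻¹ = σ) (k : Fin m) : σ (σ k) = k := by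
  nth_rewrite 2 [← h]
  exact σ.apply_symm_apply k

lemma fpf_apply_apply {σ : Equiv.Perm (Fin m)} (h : isFPF σ) (k : Fin m) : σ (σ k) = k := by
  have := h.1
  calc σ (σ k) = (σ * σ) k := rfl
  _ = k := by rw [this]; rfl

lemma Rk_mono_left (σ : Equiv.Perm (Fin m)) {a a' : ℕ} (b : ℕ) (h : a ≤ a') :
    Rk σ a b ≤ Rk σ a' b := by
  apply Finset.card_le_card
  intro k hk
  simp only [Finset.mem_filter] at *
  exact ⟨hk.1, hk.2.1.trans h, hk.2.2⟩

lemma Rk_mono_right (σ : Equiv.Perm (Fin m)) (a : ℕ) {b b' : ℕ} (h : b ≤ b') :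
    Rk σ a b ≤ Rk σ a b' := by
  apply Finset.card_le_card
  intro k hk
  simp only [Finset.mem_filter] at *
  exact ⟨hk.1, hk.2.1, hk.2.2.trans h⟩

lemma Rk_le (σ : Equiv.Perm (Fin m)) (a b : ℕ) : Rk σ a b ≤ a + 1 := by
  have : (Finset.univ.filter fun k : Fin m => k.val ≤ a ∧ (σ k).val ≤ b) ⊆
      (Finset.univ.filter fun k : Fin m => k.val ≤ a) := by
    intro k hk; simp only [Finset.mem_filter] at *; exact ⟨hk.1, hk.2.1⟩
  refine (Finset.card_le_card this).trans ?_
  have : (Finset.univ.filter fun k : Fin m => k.val ≤ a).card =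
      ((Finset.univ.filter fun k : Fin m => k.val ≤ a).image Fin.val).card := by
    rw [Finset.card_image_of_injective _ Fin.val_injective]
  rw [this]
  have hsub : ((Finset.univ.filter fun k : Fin m => k.val ≤ a).image Fin.val) ⊆
      Finset.range (a+1) := by
    intro x hx
    simp only [Finset.mem_image, Finset.mem_filter, Finset.mem_range] at *
    obtain ⟨k, hk, rfl⟩ := hx; omega
  simpa using Finset.card_le_card hsub

/-- row step -/
lemma Rk_succ_row (σ : Equiv.Perm (Fin m)) (a b : ℕ) (h : a + 1 < m) :
    Rk σ (a+1) b = Rk σ a b + (if (σ ⟨a+1, h⟩).val ≤ b then 1 else 0) := by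
  classical
  unfold Rk
  have hsplit : (Finset.univ.filter fun k : Fin m => k.val ≤ a + 1 ∧ (σ k).val ≤ b) =
      (Finset.univ.filter fun k : Fin m => k.val ≤ a ∧ (σ k).val ≤ b) ∪
      (Finset.univ.filter fun k : Fin m => k = ⟨a+1, h⟩ ∧ (σ k).val ≤ b) := by
    ext k
    simp only [Finset.mem_filter, Finset.mem_union, Finset.mem_univ, true_and]
    constructor
    · rintro ⟨h1, h2⟩
      rcases Nat.lt_or_ge k.val (a+1) with h3 | h3
      · exact Or.inl ⟨by omega, h2⟩
      · right; refine ⟨?_, h2⟩; apply Fin.ext; simp; omega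
    · rintro (⟨h1, h2⟩ | ⟨h1, h2⟩)
      · exact ⟨by omega, h2⟩
      · subst h1; exact ⟨le_refl _, h2⟩
  rw [hsplit, Finset.card_union_of_disjoint]
  · congr 1
    by_cases hc : (σ (⟨a+1, h⟩ : Fin m)).val ≤ b
    · rw [if_pos hc]
      have : (Finset.univ.filter fun k : Fin m => k = ⟨a+1, h⟩ ∧ (σ k).val ≤ b) = {⟨a+1,h⟩} := by
        ext k
        simp only [Finset.mem_filter, Finset.mem_univ, true_and, Finset.mem_singleton]
        constructor
        · rintro ⟨rfl, _⟩; rfl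
        · rintro rfl; exact ⟨rfl, hc⟩
      rw [this]; rfl
    · rw [if_neg hc]
      have : (Finset.univ.filter fun k : Fin m => k = ⟨a+1, h⟩ ∧ (σ k).val ≤ b) = ∅ := by
        ext k
        simp only [Finset.mem_filter, Finset.mem_univ, true_and, Finset.notMem_empty,
          iff_false, not_and]
        rintro rfl; exact hc
      rw [this]; rfl
  · rw [Finset.disjoint_filter]
    rintro k _ ⟨h1, _⟩ ⟨h2, _⟩
    subst h2; simp at h1

/-- column step -/
lemma Rk_succ_col (σ : Equiv.Perm (Fin m)) (a b : ℕ) (h : b + 1 < m) :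
    Rk σ a (b+1) = Rk σ a b + (if (σ⁻¹ ⟨b+1, h⟩).val ≤ a then 1 else 0) := by
  classical
  unfold Rk
  have hsplit : (Finset.univ.filter fun k : Fin m => k.val ≤ a ∧ (σ k).val ≤ b + 1) =
      (Finset.univ.filter fun k : Fin m => k.val ≤ a ∧ (σ k).val ≤ b) ∪
      (Finset.univ.filter fun k : Fin m => k.val ≤ a ∧ σ k = ⟨b+1, h⟩) := by
    ext k
    simp only [Finset.mem_filter, Finset.mem_union, Finset.mem_univ, true_and]
    constructor
    · rintro ⟨h1, h2⟩
      rcases Nat.lt_or_ge (σ k).val (b+1) with h3 | h3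
      · exact Or.inl ⟨h1, by omega⟩
      · right; refine ⟨h1, ?_⟩; apply Fin.ext; simp; omega
    · rintro (⟨h1, h2⟩ | ⟨h1, h2⟩)
      · exact ⟨h1, by omega⟩
      · rw [h2]; exact ⟨h1, le_refl _⟩
  rw [hsplit, Finset.card_union_of_disjoint]
  · congr 1
    by_cases hc : (σ⁻¹ (⟨b+1, h⟩ : Fin m)).val ≤ a
    · rw [if_pos hc]
      have : (Finset.univ.filter fun k : Fin m => k.val ≤ a ∧ σ k = ⟨b+1, h⟩) =
          {σ⁻¹ ⟨b+1,h⟩} := by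
        ext k
        simp only [Finset.mem_filter, Finset.mem_univ, true_and, Finset.mem_singleton]
        constructor
        · rintro ⟨_, h2⟩
          rw [← h2]; simp
        · rintro rfl; exact ⟨hc, by simp⟩
      rw [this]; rfl
    · rw [if_neg hc]
      have : (Finset.univ.filter fun k : Fin m => k.val ≤ a ∧ σ k = ⟨b+1, h⟩) = ∅ := by
        ext k
        simp only [Finset.mem_filter, Finset.mem_univ, true_and, Finset.notMem_empty,
          iff_false, not_and]
        intro h1 h2
        apply hc
        rw [← h2]; simpa using h1
      rw [this]; rfl
  · rw [Finset.disjoint_filter]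
    rintro k _ ⟨_, h1⟩ ⟨_, h2⟩
    rw [h2] at h1; simp at h1

/-- symmetry of the rank matrix of an involution -/
lemma Rk_symm {σ : Equiv.Perm (Fin m)} (h : σ⁻¹ = σ) (a b : ℕ) : Rk σ a b = Rk σ b a := by
  unfold Rk
  apply Finset.card_bij (fun k _ => σ k)
  · intro k hk
    simp only [Finset.mem_filter, Finset.mem_univ, true_and] at *
    exact ⟨hk.2, by rw [invol_apply h]; exact hk.1⟩
  · intro k1 h1 k2 h2 he
    exact σ.injective he
  · intro k hk
    simp only [Finset.mem_filter, Finset.mem_univ, true_and] at *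
    exact ⟨σ k, ⟨hk.2, by rw [invol_apply h]; exact hk.1⟩, invol_apply h k⟩

/-- a finset closed under a fixed-point-free involution has even cardinality -/
lemma even_card_invol {α : Type*} [DecidableEq α] (g : α → α) :
    ∀ (F : Finset α), (∀ x ∈ F, g x ∈ F) → (∀ x ∈ F, g (g x) = x) → (∀ x ∈ F, g x ≠ x) →
      Even F.card := by
  intro F
  induction F using Finset.strongInduction with
  | _ F ih =>
    intro hcl hinv hfpf
    rcases Finset.eq_empty_or_nonempty F with rfl | ⟨x, hx⟩
    · simp
    · have hgx : g x ∈ F := hcl x hx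
      have hne : g x ≠ x := hfpf x hx
      have hsub : ({x, g x} : Finset α) ⊆ F := by
        intro y hy
        simp only [Finset.mem_insert, Finset.mem_singleton] at hy
        rcases hy with rfl | rfl
        · exact hx
        · exact hgx
      have hss : F \ {x, g x} ⊂ F := by
        apply Finset.sdiff_ssubset hsub
        exact ⟨x, by simp⟩
      have hcl' : ∀ y ∈ F \ {x, g x}, g y ∈ F \ {x, g x} := by
        intro y hy
        simp only [Finset.mem_sdiff, Finset.mem_insert, Finset.mem_singleton] at *
        push_neg at hy ⊢
        refine ⟨hcl y hy.1, ?_, ?_⟩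
        · intro hgy
          apply hy.2.2
          rw [← hinv y hy.1, hgy]
        · intro hgy
          apply hy.2.1
          have h1 := hinv y hy.1
          have h2 := hinv x hx
          rw [hgy] at h1
          rw [← h1, h2]
      have hinv' : ∀ y ∈ F \ {x, g x}, g (g y) = y := fun y hy => hinv y (Finset.mem_sdiff.mp hy).1
      have hfpf' : ∀ y ∈ F \ {x, g x}, g y ≠ y := fun y hy => hfpf y (Finset.mem_sdiff.mp hy).1
      have hcard : F.card = (F \ {x, g x}).card + 2 := by
        have := Finset.card_sdiff_of_subset hsub
        have hc2 : ({x, g x} : Finset α).card = 2 := by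
          rw [Finset.card_insert_of_notMem (by simp [Ne.symm hne])]
          rfl
        have hle := Finset.card_le_card hsub
        rw [hc2] at this
        omega
      rw [hcard]
      obtain ⟨c, hc⟩ := ih _ hss hcl' hinv' hfpf'
      exact ⟨c + 1, by omega⟩

lemma Rk_diag_even {σ : Equiv.Perm (Fin m)} (h : isFPF σ) (a b : ℕ) (hab : a = b) :
    Even (Rk σ a b) := by
  subst hab
  apply even_card_invol (fun k => σ k)
  · intro k hk
    simp only [Finset.mem_filter, Finset.mem_univ, true_and] at *
    rw [fpf_apply_apply h]
    exact ⟨hk.2, hk.1⟩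
  · intro k _; exact fpf_apply_apply h k
  · intro k _; exact h.2 k

/-- cardinality of an initial val-segment of `Fin m` -/
lemma card_val_lt (c : ℕ) (h : c ≤ m) :
    (Finset.univ.filter fun k : Fin m => k.val < c).card = c := by
  conv_rhs => rw [← Finset.card_range c]
  apply Finset.card_bij (fun (k : Fin m) _ => k.val)
  · intro k hk
    simp only [Finset.mem_filter, Finset.mem_range] at *
    exact hk.2
  · intro k1 h1 k2 h2 he
    exact Fin.ext he
  · intro t ht
    simp only [Finset.mem_range] at ht
    exact ⟨⟨t, lt_of_lt_of_le ht h⟩, by simp [ht], rfl⟩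

lemma inSympDiag_iff {σ : Equiv.Perm (Fin m)} (hinv : σ⁻¹ = σ) (a b : Fin m) :
    inSympDiag σ a b ↔ a.val < b.val ∧ b.val < (σ a).val ∧ a.val < (σ b).val := by
  unfold inSympDiag
  rw [hinv]
  rfl

/-- the key reduction: comparison at the symplectic essential boxes implies
comparison everywhere, for fixed-point-free involutions -/
theorem oppLE_of_ess {τ ι : Equiv.Perm (Fin m)} (hτ : isFPF τ) (hι : isFPF ι)
    (H : ∀ a b : Fin m, sympEssBox ι a b → rkm τ a b ≤ rkm ι a b) : oppLE τ ι := by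
  have hιi : ι⁻¹ = ι := fpf_inv_eq hι
  have hτi : τ⁻¹ = τ := fpf_inv_eq hτ
  -- step 1: comparison on symplectic diagram cells, by walking southeast
  have walk : ∀ N (a b : Fin m), 2 * m - a.val - b.val ≤ N → inSympDiag ι a b →
      Rk τ a.val b.val ≤ Rk ι a.val b.val := by
    intro N
    induction N with
    | zero =>
      intro a b hN hD
      have := a.isLt; have := b.isLt
      omega
    | succ N ih =>
      intro a b hN hD
      by_cases hE : sympEssBox ι a b
      · exact H a b hE
      · have hBC : ¬ ((∀ h : a.val + 1 < m, ¬ inSympDiag ι ⟨a.val + 1, h⟩ b) ∧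
            (∀ h : b.val + 1 < m, ¬ inSympDiag ι a ⟨b.val + 1, h⟩)) :=
          fun hbc => hE ⟨hD, hbc.1, hbc.2⟩
        rw [not_and_or] at hBC
        rcases hBC with h1 | h1 <;> push_neg at h1
        · -- a south cell exists
          obtain ⟨hlt, hcell⟩ := h1
          rw [inSympDiag_iff hιi] at hcell
          have hnc : ¬ (ι ⟨a.val + 1, hlt⟩).val ≤ b.val := by omega
          have key : Rk ι (a.val + 1) b.val = Rk ι a.val b.val := by
            rw [Rk_succ_row ι a.val b.val hlt, if_neg hnc]
            omega
          rw [← inSympDiag_iff hιi] at hcell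
          have h3 : Rk τ a.val b.val ≤ Rk τ (a.val+1) b.val := Rk_mono_left τ b.val (by omega)
          have h4 := ih ⟨a.val+1, hlt⟩ b (by
            have hv : ((⟨a.val + 1, hlt⟩ : Fin m) : ℕ) = a.val + 1 := rfl
            omega) hcell
          have hv : ((⟨a.val + 1, hlt⟩ : Fin m) : ℕ) = a.val + 1 := rfl
          rw [hv] at h4
          omega
        · -- an east cell exists
          obtain ⟨hlt, hcell⟩ := h1
          rw [inSympDiag_iff hιi] at hcell
          have hnc : ¬ (ι⁻¹ ⟨b.val + 1, hlt⟩).val ≤ a.val := by rw [hιi]; omega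
          have key : Rk ι a.val (b.val + 1) = Rk ι a.val b.val := by
            rw [Rk_succ_col ι a.val b.val hlt, if_neg hnc]
            omega
          rw [← inSympDiag_iff hιi] at hcell
          have h3 : Rk τ a.val b.val ≤ Rk τ a.val (b.val+1) := Rk_mono_right τ a.val (by omega)
          have h4 := ih a ⟨b.val+1, hlt⟩ (by
            have hv : ((⟨b.val + 1, hlt⟩ : Fin m) : ℕ) = b.val + 1 := rfl
            omega) hcell
          have hv : ((⟨b.val + 1, hlt⟩ : Fin m) : ℕ) = b.val + 1 := rfl
          rw [hv] at h4
          omega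
  -- step 2: main strong induction on a+b over the region a ≤ b
  have main : ∀ N (a b : ℕ), a + b ≤ N → a ≤ b → b < m → Rk τ a b ≤ Rk ι a b := by
    intro N
    induction N with
    | zero =>
      intro a b hN hab hbm
      have ha0 : a = 0 := by omega
      have hb0 : b = 0 := by omega
      subst ha0; subst hb0
      have h0 : ∀ (σ : Equiv.Perm (Fin m)), isFPF σ → Rk σ 0 0 = 0 := by
        intro σ hσ
        unfold Rk
        rw [Finset.card_eq_zero]
        ext k
        simp only [Finset.mem_filter, Finset.mem_univ, true_and, Finset.notMem_empty,
          iff_false, not_and]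
        intro hk1 hk2
        apply hσ.2 k
        apply Fin.ext
        omega
      rw [h0 τ hτ, h0 ι hι]
    | succ N ih =>
      intro a b hN hab hbm
      rcases Nat.eq_or_lt_of_le hab with rfl | haltb
      · -- diagonal case
        rcases Nat.eq_zero_or_pos a with rfl | hpos
        · exact ih 0 0 (by omega) (le_refl _) hbm
        · obtain ⟨a', rfl⟩ : ∃ a', a = a' + 1 := ⟨a - 1, by omega⟩
          have hstep := Rk_succ_row ι a' (a'+1) hbm
          have hstepτ := Rk_succ_row τ a' (a'+1) hbm
          have hih : Rk τ a' (a'+1) ≤ Rk ι a' (a'+1) := ih a' (a'+1) (by omega) (by omega) hbm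
          have hbnd : Rk τ (a'+1) (a'+1) ≤ Rk τ a' (a'+1) + 1 := by
            rw [hstepτ]; split_ifs <;> omega
          by_cases hc : (ι ⟨a'+1, hbm⟩).val ≤ a'+1
          · rw [if_pos hc] at hstep
            omega
          · rw [if_neg hc] at hstep
            obtain ⟨c1, hc1⟩ := Rk_diag_even hτ (a'+1) (a'+1) rfl
            obtain ⟨c2, hc2⟩ := Rk_diag_even hι (a'+1) (a'+1) rfl
            omega
      · -- strictly above diagonal
        have ham : a < m := by omega
        by_cases hD : inSympDiag ι ⟨a, ham⟩ ⟨b, hbm⟩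
        · exact walk (2*m) ⟨a, ham⟩ ⟨b, hbm⟩ (by omega) hD
        · rw [inSympDiag_iff hιi] at hD
          push_neg at hD
          have hD' := hD haltb
          by_cases hc : (ι ⟨a, ham⟩).val ≤ b
          · -- row reduction
            rcases Nat.eq_zero_or_pos a with ha0 | hpos
            · -- a = 0 : LHS ≤ 1 = RHS
              subst ha0
              have h1 : Rk ι 0 b = 1 := by
                unfold Rk
                have hset : (Finset.univ.filter fun k : Fin m => k.val ≤ 0 ∧ (ι k).val ≤ b) =
                    {(⟨0, ham⟩ : Fin m)} := by
                  ext k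
                  simp only [Finset.mem_filter, Finset.mem_univ, true_and, Finset.mem_singleton]
                  constructor
                  · rintro ⟨hk1, _⟩
                    apply Fin.ext
                    show k.val = 0
                    omega
                  · rintro rfl
                    exact ⟨le_refl _, hc⟩
                rw [hset]
                rfl
              rw [h1]
              have := Rk_le τ 0 b
              omega
            · obtain ⟨a', rfl⟩ : ∃ a', a = a' + 1 := ⟨a - 1, by omega⟩
              have hstep := Rk_succ_row ι a' b ham
              have hstepτ := Rk_succ_row τ a' b ham
              rw [if_pos hc] at hstep
              have hih : Rk τ a' b ≤ Rk ι a' b := ih a' b (by omega) (by omega) hbm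
              have : Rk τ (a'+1) b ≤ Rk τ a' b + 1 := by
                rw [hstepτ]; split_ifs <;> omega
              omega
          · -- column reduction
            push_neg at hc
            have hc2 : (ι ⟨b, hbm⟩).val ≤ a := hD' hc
            obtain ⟨b', rfl⟩ : ∃ b', b = b' + 1 := ⟨b - 1, by omega⟩
            have hstep := Rk_succ_col ι a b' hbm
            have hstepτ := Rk_succ_col τ a b' hbm
            rw [hιi] at hstep
            rw [if_pos hc2] at hstep
            have hih : Rk τ a b' ≤ Rk ι a b' := ih a b' (by omega) (by omega) (by omega)
            have : Rk τ a (b'+1) ≤ Rk τ a b' + 1 := by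
              rw [hstepτ]; split_ifs <;> omega
            omega
  -- conclude
  intro i j
  rw [rkm_eq_Rk, rkm_eq_Rk]
  rcases le_or_gt i.val j.val with h | h
  · exact main (2*m) i.val j.val (by omega) h j.isLt
  · rw [Rk_symm hτi, Rk_symm hιi]
    exact main (2*m) j.val i.val (by omega) (by omega) i.isLt

/-- data for building a fixed-point-free involutive permutation of `Fin m`
from a function on `ℕ` -/
structure InvolData (m : ℕ) where
  f : ℕ → ℕ
  bound : ∀ k, k < m → f k < m
  invol : ∀ k, k < m → f (f k) = k
  nfix : ∀ k, k < m → f k ≠ k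

def InvolData.perm {m : ℕ} (D : InvolData m) : Equiv.Perm (Fin m) :=
  Function.Involutive.toPerm (fun k => ⟨D.f k.val, D.bound _ k.isLt⟩)
    (fun k => Fin.ext (D.invol _ k.isLt))

lemma InvolData.apply {m : ℕ} (D : InvolData m) (k : Fin m) :
    (D.perm k).val = D.f k.val := rfl

lemma InvolData.isFPF {m : ℕ} (D : InvolData m) : isFPF D.perm := by
  constructor
  · ext k
    have : (D.perm (D.perm k)).val = k.val := D.invol _ k.isLt
    simpa using this
  · intro k h
    exact D.nfix _ k.isLt (congrArg Fin.val h)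

lemma InvolData.inv {m : ℕ} (D : InvolData m) : D.perm⁻¹ = D.perm :=
  fpf_inv_eq D.isFPF

lemma InvolData.cell_iff {m : ℕ} (D : InvolData m) (a b : Fin m) :
    inSympDiag D.perm a b ↔ a.val < b.val ∧ b.val < D.f a.val ∧ a.val < D.f b.val := by
  rw [inSympDiag_iff D.inv, D.apply, D.apply]

/-- essential boxes through a numeric characterization of the diagram -/
lemma InvolData.ess_iff {m : ℕ} (D : InvolData m) (P : ℕ → ℕ → Prop)
    (hP : ∀ a b : ℕ, a < m → b < m →
      ((a < b ∧ b < D.f a ∧ a < D.f b) ↔ P a b)) (a b : Fin m) :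
    sympEssBox D.perm a b ↔
      (P a.val b.val ∧ (∀ _ : a.val + 1 < m, ¬ P (a.val+1) b.val) ∧
        (∀ _ : b.val + 1 < m, ¬ P a.val (b.val+1))) := by
  unfold sympEssBox
  constructor
  · rintro ⟨h1, h2, h3⟩
    refine ⟨(hP a.val b.val a.isLt b.isLt).mp ((D.cell_iff a b).mp h1), ?_, ?_⟩
    · intro h
      intro hc
      exact h2 h (((D.cell_iff _ _).mpr ((hP (a.val+1) b.val h b.isLt).mpr hc)))
    · intro h
      intro hc
      exact h3 h (((D.cell_iff _ _).mpr ((hP a.val (b.val+1) a.isLt h).mpr hc)))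
  · rintro ⟨h1, h2, h3⟩
    refine ⟨(D.cell_iff a b).mpr ((hP a.val b.val a.isLt b.isLt).mpr h1), ?_, ?_⟩
    · intro h hc
      exact h2 h ((hP (a.val+1) b.val h b.isLt).mp ((D.cell_iff _ _).mp hc))
    · intro h hc
      exact h3 h ((hP a.val (b.val+1) a.isLt h).mp ((D.cell_iff _ _).mp hc))

/-- compute a rank entry from an initial-segment description of the filter -/
lemma Rk_eq_of_iff {m : ℕ} (σ : Equiv.Perm (Fin m)) (a b c : ℕ) (hc : c ≤ m)
    (h : ∀ k : Fin m, (k.val ≤ a ∧ (σ k).val ≤ b) ↔ k.val < c) : Rk σ a b = c := by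
  unfold Rk
  rw [show (Finset.univ.filter fun k : Fin m => k.val ≤ a ∧ (σ k).val ≤ b) =
      (Finset.univ.filter fun k : Fin m => k.val < c) from
    Finset.filter_congr (fun k _ => by simp [h k])]
  exact card_val_lt c hc

/-! ### The even-rank basic element -/

/-- the basic fixed-point-free involution attached to a box `(i,j)` and even
rank `2s`.  Blocks: adjacent pairs on `[0,2s)`; rows `[2s,i]` paired with
`[j+1, j+1+(i-2s)]`; the rest paired consecutively. -/
def fEven (i j s k : ℕ) : ℕ :=
  if k < 2*s then (if k % 2 = 0 then k+1 else k-1)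
  else if k ≤ i then j+1+(k-2*s)
  else if k ≤ j then (if (k+i) % 2 = 1 then (if k < j then k+1 else j+(i-2*s)+2) else k-1)
  else if k ≤ j+(i-2*s)+1 then 2*s+(k-(j+1))
  else (if k % 2 = 0 then k+1 else (if k = j+(i-2*s)+2 then j else k-1))

section EvenCase

variable {m i j s : ℕ} (h1 : 2*s ≤ i) (h2 : i < j) (h3 : j + (i - 2*s) + 2 ≤ m)
  (h4 : m % 2 = 0)

include h1 h2 h3 h4

set_option linter.unusedSectionVars false

lemma fEven_spec : ∀ k, k < m → ∃ v, fEven i j s k = v ∧ (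
    (k < 2*s ∧ k % 2 = 0 ∧ v = k+1) ∨
    (k < 2*s ∧ k % 2 = 1 ∧ v = k-1) ∨
    (2*s ≤ k ∧ k ≤ i ∧ v = j+1+(k-2*s)) ∨
    (i < k ∧ k ≤ j ∧ (k+i) % 2 = 1 ∧ k < j ∧ v = k+1) ∨
    (i < k ∧ k = j ∧ (k+i) % 2 = 1 ∧ v = j+(i-2*s)+2) ∨
    (i < k ∧ k ≤ j ∧ (k+i) % 2 = 0 ∧ v = k-1) ∨
    (j < k ∧ k ≤ j+(i-2*s)+1 ∧ v = 2*s+(k-(j+1))) ∨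
    (j+(i-2*s)+1 < k ∧ k % 2 = 0 ∧ v = k+1) ∨
    (j+(i-2*s)+1 < k ∧ k % 2 = 1 ∧ k = j+(i-2*s)+2 ∧ v = j) ∨
    (j+(i-2*s)+1 < k ∧ k % 2 = 1 ∧ k ≠ j+(i-2*s)+2 ∧ v = k-1)) := by
  intro k hk
  unfold fEven
  split_ifs <;>
    first
      | exact ⟨_, rfl, Or.inl (by omega)⟩
      | exact ⟨_, rfl, Or.inr (Or.inl (by omega))⟩
      | exact ⟨_, rfl, Or.inr (Or.inr (Or.inl (by omega)))⟩
      | exact ⟨_, rfl, Or.inr (Or.inr (Or.inr (Or.inl (by omega))))⟩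
      | exact ⟨_, rfl, Or.inr (Or.inr (Or.inr (Or.inr (Or.inl (by omega)))))⟩
      | exact ⟨_, rfl, Or.inr (Or.inr (Or.inr (Or.inr (Or.inr (Or.inl (by omega))))))⟩
      | exact ⟨_, rfl, Or.inr (Or.inr (Or.inr (Or.inr (Or.inr (Or.inr (Or.inl (by omega)))))))⟩
      | exact ⟨_, rfl, Or.inr (Or.inr (Or.inr (Or.inr (Or.inr (Or.inr (Or.inr (Or.inl (by omega))))))))⟩
      | exact ⟨_, rfl, Or.inr (Or.inr (Or.inr (Or.inr (Or.inr (Or.inr (Or.inr (Or.inr (Or.inl (by omega)))))))))⟩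
      | exact ⟨_, rfl, Or.inr (Or.inr (Or.inr (Or.inr (Or.inr (Or.inr (Or.inr (Or.inr (Or.inr (by omega)))))))))⟩

lemma fEven_bound : ∀ k, k < m → fEven i j s k < m := by
  intro k hk
  obtain ⟨v, hv, hd⟩ := fEven_spec h1 h2 h3 h4 k hk
  rw [hv]
  omega

lemma fEven_invol : ∀ k, k < m → fEven i j s (fEven i j s k) = k := by
  intro k hk
  obtain ⟨v, hv, hd⟩ := fEven_spec h1 h2 h3 h4 k hk
  obtain ⟨w, hw, he⟩ := fEven_spec h1 h2 h3 h4 v (by omega)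
  rw [hv, hw]
  omega

lemma fEven_nfix : ∀ k, k < m → fEven i j s k ≠ k := by
  intro k hk
  obtain ⟨v, hv, hd⟩ := fEven_spec h1 h2 h3 h4 k hk
  rw [hv]
  omega

lemma fEven_cell : ∀ a b : ℕ, a < m → b < m →
    ((a < b ∧ b < fEven i j s a ∧ a < fEven i j s b) ↔
      (2*s ≤ a ∧ a ≤ i ∧ a < b ∧ b ≤ j)) := by
  intro a b ha hb
  obtain ⟨v, hv, hd⟩ := fEven_spec h1 h2 h3 h4 a ha
  obtain ⟨w, hw, he⟩ := fEven_spec h1 h2 h3 h4 b hb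
  rw [hv, hw]
  omega

/-- the even basic element as an `InvolData` -/
def evenData : InvolData m where
  f := fEven i j s
  bound := fEven_bound h1 h2 h3 h4
  invol := fEven_invol h1 h2 h3 h4
  nfix := fEven_nfix h1 h2 h3 h4

lemma evenData_ess (a b : Fin m) :
    sympEssBox (evenData h1 h2 h3 h4).perm a b ↔ (a.val = i ∧ b.val = j) := by
  rw [InvolData.ess_iff _ (fun x y => 2*s ≤ x ∧ x ≤ i ∧ x < y ∧ y ≤ j)
    (fEven_cell h1 h2 h3 h4)]
  have ha := a.isLt
  have hb := b.isLt
  constructor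
  · rintro ⟨hP, hS, hE⟩
    have hbj : b.val = j := by
      by_contra hne
      have hlt : b.val + 1 < m := by omega
      exact hE hlt (by omega)
    have hai : a.val = i := by
      by_contra hne
      have hlt : a.val + 1 < m := by omega
      exact hS hlt (by omega)
    exact ⟨hai, hbj⟩
  · rintro ⟨ha', hb'⟩
    refine ⟨by omega, ?_, ?_⟩
    · intro h hc; omega
    · intro h hc; omega

lemma evenData_rk : Rk (evenData h1 h2 h3 h4).perm i j = 2*s := by
  apply Rk_eq_of_iff _ i j (2*s) (by omega)
  intro k
  rw [InvolData.apply]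
  obtain ⟨v, hv, hd⟩ := fEven_spec h1 h2 h3 h4 k.val k.isLt
  show (k.val ≤ i ∧ fEven i j s k.val ≤ j) ↔ k.val < 2*s
  rw [hv]
  omega

end EvenCase

/-! ### data lemmas at an essential box of `ι` -/

section BoxFacts

variable {ι : Equiv.Perm (Fin m)} (hι : isFPF ι) {iF jF : Fin m}
include hι

omit hι in
lemma Rk_congr (σ : Equiv.Perm (Fin m)) (a b a' b' : ℕ)
    (h : ∀ k : Fin m, (k.val ≤ a ∧ (σ k).val ≤ b) ↔ (k.val ≤ a' ∧ (σ k).val ≤ b')) :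
    Rk σ a b = Rk σ a' b' := by
  unfold Rk
  congr 1
  apply Finset.filter_congr
  intro k _
  simpa using h k

lemma box_le (hbox : sympEssBox ι iF jF) : Rk ι iF.val jF.val ≤ iF.val := by
  have hc := ((inSympDiag_iff (fpf_inv_eq hι) iF jF).mp hbox.1)
  have hsub : (Finset.univ.filter fun k : Fin m => k.val ≤ iF.val ∧ (ι k).val ≤ jF.val) ⊆
      (Finset.univ.filter fun k : Fin m => k.val < iF.val) := by
    intro k hk
    simp only [Finset.mem_filter, Finset.mem_univ, true_and] at *
    rcases Nat.lt_or_ge k.val iF.val with h | h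
    · exact h
    · exfalso
      have : k = iF := Fin.ext (by omega)
      subst this
      omega
  have := Finset.card_le_card hsub
  rw [card_val_lt iF.val (le_of_lt iF.isLt)] at this
  exact this

lemma box_ge (hbox : sympEssBox ι iF jF) :
    iF.val + jF.val + 2 ≤ Rk ι iF.val jF.val + m := by
  classical
  obtain ⟨i, hi⟩ : ∃ i, iF.val = i := ⟨_, rfl⟩
  obtain ⟨j, hj⟩ : ∃ j, jF.val = j := ⟨_, rfl⟩
  rw [hi, hj]
  set A := (Finset.univ.filter fun k : Fin m => k.val ≤ i ∧ (ι k).val ≤ j) with hA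
  set B := (Finset.univ.filter fun k : Fin m => k.val ≤ i ∧ j < (ι k).val) with hB
  have hunion : A ∪ B = (Finset.univ.filter fun k : Fin m => k.val < i + 1) := by
    ext k
    simp only [hA, hB, Finset.mem_union, Finset.mem_filter, Finset.mem_univ, true_and]
    omega
  have hdisj : Disjoint A B := by
    rw [Finset.disjoint_filter]
    rintro k _ ⟨_, hk2⟩ ⟨_, hk4⟩
    omega
  have hcard : A.card + B.card = i + 1 := by
    rw [← Finset.card_union_of_disjoint hdisj, hunion, card_val_lt (i+1) (by omega)]
  -- B injects into the set of values above j
  have hBle : B.card ≤ m - (j + 1) := by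
    have hsub : B.image (fun k => ι k) ⊆
        (Finset.univ.filter fun v : Fin m => j < v.val) := by
      intro v hv
      simp only [Finset.mem_image, hB, Finset.mem_filter, Finset.mem_univ, true_and] at *
      obtain ⟨k, hk, rfl⟩ := hv
      exact hk.2
    have h1 : (B.image (fun k => ι k)).card = B.card :=
      Finset.card_image_of_injective _ (Equiv.injective ι)
    have h2 : (Finset.univ.filter fun v : Fin m => j < v.val).card = m - (j+1) := by
      have hcompl : (Finset.univ.filter fun v : Fin m => j < v.val) =
          Finset.univ \ (Finset.univ.filter fun v : Fin m => v.val < j + 1) := by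
        ext v
        simp only [Finset.mem_filter, Finset.mem_sdiff, Finset.mem_univ, true_and]
        omega
      rw [hcompl, Finset.card_sdiff_of_subset (Finset.filter_subset _ _), card_val_lt (j+1) (by omega)]
      simp
    calc B.card = (B.image (fun k => ι k)).card := h1.symm
    _ ≤ _ := Finset.card_le_card hsub
    _ = m - (j+1) := h2
  have hjm : j < m := by
    have := jF.isLt
    omega
  have hR : Rk ι i j = A.card := rfl
  omega

/-- at an odd essential box we have `j ≥ i+2` and the subsidiary rank bound -/
lemma box_odd (hbox : sympEssBox ι iF jF) (hodd : Rk ι iF.val jF.val % 2 = 1) :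
    iF.val + 2 ≤ jF.val ∧ Rk ι (iF.val - 1) iF.val + 1 ≤ Rk ι iF.val jF.val ∧
      Rk ι (iF.val - 1) iF.val % 2 = 0 := by
  have hιi := fpf_inv_eq hι
  have hc := (inSympDiag_iff hιi iF jF).mp hbox.1
  obtain ⟨i, hi⟩ : ∃ i, iF.val = i := ⟨_, rfl⟩
  obtain ⟨j, hj⟩ : ∃ j, jF.val = j := ⟨_, rfl⟩
  rw [hi, hj] at hodd hc ⊢
  have h1 := box_le hι hbox
  rw [hi, hj] at h1
  have hile : 1 ≤ i := by omega
  -- a diagonal congruence: for k ≤ i-1, having ι k ≤ i is the same as ι k ≤ i-1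
  have hcong : Rk ι (i-1) i = Rk ι (i-1) (i-1) := by
    apply Rk_congr
    intro k
    constructor
    · rintro ⟨hk1, hk2⟩
      refine ⟨hk1, ?_⟩
      rcases Nat.lt_or_ge (ι k).val i with h | h
      · omega
      · exfalso
        have hik : ι k = iF := Fin.ext (by omega)
        have : k = ι iF := by
          rw [← hik, invol_apply hιi]
        rw [this] at hk1
        omega
    · rintro ⟨hk1, hk2⟩
      exact ⟨hk1, by omega⟩
  have heven : Rk ι (i-1) (i-1) % 2 = 0 := by
    obtain ⟨c, hc⟩ := Rk_diag_even hι (i-1) (i-1) rfl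
    omega
  have hsub : Rk ι (i-1) (i-1) ≤ Rk ι i j := by
    calc Rk ι (i-1) (i-1) ≤ Rk ι i (i-1) := Rk_mono_left ι (i-1) (by omega)
    _ ≤ Rk ι i j := Rk_mono_right ι i (by omega)
  refine ⟨?_, by omega, by omega⟩
  -- now show j ≥ i + 2, i.e. j ≠ i + 1
  by_contra hcon
  have hji : j = i + 1 := by omega
  have hcong2 : Rk ι i j = Rk ι (i-1) (i-1) := by
    apply Rk_congr
    intro k
    constructor
    · rintro ⟨hk1, hk2⟩
      have hk1' : k.val ≤ i - 1 := by
        rcases Nat.lt_or_ge k.val i with h | h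
        · omega
        · exfalso
          have : k = iF := Fin.ext (by omega)
          subst this
          omega
      refine ⟨hk1', ?_⟩
      rcases Nat.lt_or_ge (ι k).val i with h | h
      · omega
      · exfalso
        rcases Nat.eq_or_lt_of_le h with he | hlt
        · -- ι k = i
          have hik : ι k = iF := Fin.ext (by omega)
          have : k = ι iF := by rw [← hik, invol_apply hιi]
          rw [this] at hk1
          omega
        · -- ι k = i + 1 = j
          have hik : ι k = jF := Fin.ext (by omega)
          have : k = ι jF := by rw [← hik, invol_apply hιi]
          rw [this] at hk1
          omega
    · rintro ⟨hk1, hk2⟩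
      exact ⟨by omega, by omega⟩
  rw [hcong2] at hodd
  omega

end BoxFacts

/-! ### The odd-rank basic element -/

/-- basic fixed-point-free involution for an odd rank `2s+1` at box `(i,j)`:
adjacent pairs on `[0,2s)`, the pair `(2s, i+1)`, rows `(2s,i]` paired with
`(j, j+(i-2s)]`, the rest consecutively. -/
def fOdd (i j s k : ℕ) : ℕ :=
  if k < 2*s then (if k % 2 = 0 then k+1 else k-1)
  else if k = 2*s then i+1
  else if k ≤ i then j+(k-2*s)
  else if k = i+1 then 2*s
  else if k ≤ j then (if (k+i) % 2 = 0 then (if k < j then k+1 else j+(i-2*s)+1) else k-1)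
  else if k ≤ j+(i-2*s) then 2*s+(k-j)
  else (if k % 2 = 0 then k+1 else (if k = j+(i-2*s)+1 then j else k-1))

section OddCase

variable {m i j s : ℕ} (h1 : 2*s+1 ≤ i) (h2 : i+2 ≤ j) (h3 : j + (i - 2*s) + 1 ≤ m)
  (h4 : m % 2 = 0)

include h1 h2 h3 h4

set_option linter.unusedSectionVars false

lemma fOdd_spec : ∀ k, k < m → ∃ v, fOdd i j s k = v ∧ (
    (k < 2*s ∧ k % 2 = 0 ∧ v = k+1) ∨
    (k < 2*s ∧ k % 2 = 1 ∧ v = k-1) ∨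
    (k = 2*s ∧ v = i+1) ∨
    (2*s < k ∧ k ≤ i ∧ v = j+(k-2*s)) ∨
    (k = i+1 ∧ v = 2*s) ∨
    (i+1 < k ∧ k ≤ j ∧ (k+i) % 2 = 0 ∧ k < j ∧ v = k+1) ∨
    (i+1 < k ∧ k = j ∧ (k+i) % 2 = 0 ∧ v = j+(i-2*s)+1) ∨
    (i+1 < k ∧ k ≤ j ∧ (k+i) % 2 = 1 ∧ v = k-1) ∨
    (j < k ∧ k ≤ j+(i-2*s) ∧ v = 2*s+(k-j)) ∨
    (j+(i-2*s) < k ∧ k % 2 = 0 ∧ v = k+1) ∨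
    (j+(i-2*s) < k ∧ k % 2 = 1 ∧ k = j+(i-2*s)+1 ∧ v = j) ∨
    (j+(i-2*s) < k ∧ k % 2 = 1 ∧ k ≠ j+(i-2*s)+1 ∧ v = k-1)) := by
  intro k hk
  unfold fOdd
  split_ifs <;>
    first
      | exact ⟨_, rfl, Or.inl (by omega)⟩
      | exact ⟨_, rfl, Or.inr (Or.inl (by omega))⟩
      | exact ⟨_, rfl, Or.inr (Or.inr (Or.inl (by omega)))⟩
      | exact ⟨_, rfl, Or.inr (Or.inr (Or.inr (Or.inl (by omega))))⟩
      | exact ⟨_, rfl, Or.inr (Or.inr (Or.inr (Or.inr (Or.inl (by omega)))))⟩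
      | exact ⟨_, rfl, Or.inr (Or.inr (Or.inr (Or.inr (Or.inr (Or.inl (by omega))))))⟩
      | exact ⟨_, rfl, Or.inr (Or.inr (Or.inr (Or.inr (Or.inr (Or.inr (Or.inl (by omega)))))))⟩
      | exact ⟨_, rfl, Or.inr (Or.inr (Or.inr (Or.inr (Or.inr (Or.inr (Or.inr (Or.inl (by omega))))))))⟩
      | exact ⟨_, rfl, Or.inr (Or.inr (Or.inr (Or.inr (Or.inr (Or.inr (Or.inr (Or.inr (Or.inl (by omega)))))))))⟩
      | exact ⟨_, rfl, Or.inr (Or.inr (Or.inr (Or.inr (Or.inr (Or.inr (Or.inr (Or.inr (Or.inr (Or.inl (by omega))))))))))⟩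
      | exact ⟨_, rfl, Or.inr (Or.inr (Or.inr (Or.inr (Or.inr (Or.inr (Or.inr (Or.inr (Or.inr (Or.inr (Or.inl (by omega)))))))))))⟩
      | exact ⟨_, rfl, Or.inr (Or.inr (Or.inr (Or.inr (Or.inr (Or.inr (Or.inr (Or.inr (Or.inr (Or.inr (Or.inr (by omega)))))))))))⟩

lemma fOdd_bound : ∀ k, k < m → fOdd i j s k < m := by
  intro k hk
  obtain ⟨v, hv, hd⟩ := fOdd_spec h1 h2 h3 h4 k hk
  rw [hv]
  omega

lemma fOdd_invol : ∀ k, k < m → fOdd i j s (fOdd i j s k) = k := by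
  intro k hk
  obtain ⟨v, hv, hd⟩ := fOdd_spec h1 h2 h3 h4 k hk
  obtain ⟨w, hw, he⟩ := fOdd_spec h1 h2 h3 h4 v (by omega)
  rw [hv, hw]
  omega

lemma fOdd_nfix : ∀ k, k < m → fOdd i j s k ≠ k := by
  intro k hk
  obtain ⟨v, hv, hd⟩ := fOdd_spec h1 h2 h3 h4 k hk
  rw [hv]
  omega

lemma fOdd_cell : ∀ a b : ℕ, a < m → b < m →
    ((a < b ∧ b < fOdd i j s a ∧ a < fOdd i j s b) ↔
      ((2*s ≤ a ∧ a ≤ i ∧ a < b ∧ b ≤ i) ∨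
        (2*s+1 ≤ a ∧ a ≤ i ∧ i+2 ≤ b ∧ b ≤ j))) := by
  intro a b ha hb
  obtain ⟨v, hv, hd⟩ := fOdd_spec h1 h2 h3 h4 a ha
  obtain ⟨w, hw, he⟩ := fOdd_spec h1 h2 h3 h4 b hb
  rw [hv, hw]
  omega

/-- the odd basic element as an `InvolData` -/
def oddData : InvolData m where
  f := fOdd i j s
  bound := fOdd_bound h1 h2 h3 h4
  invol := fOdd_invol h1 h2 h3 h4
  nfix := fOdd_nfix h1 h2 h3 h4

lemma oddData_ess (a b : Fin m) :
    sympEssBox (oddData h1 h2 h3 h4).perm a b ↔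
      ((a.val = i-1 ∧ b.val = i) ∨ (a.val = i ∧ b.val = j)) := by
  rw [InvolData.ess_iff _ (fun x y => (2*s ≤ x ∧ x ≤ i ∧ x < y ∧ y ≤ i) ∨
      (2*s+1 ≤ x ∧ x ≤ i ∧ i+2 ≤ y ∧ y ≤ j)) (fOdd_cell h1 h2 h3 h4)]
  have ha := a.isLt
  have hb := b.isLt
  constructor
  · rintro ⟨hP, hS, hE⟩
    rcases hP with hP | hP
    · -- in the triangle: b = i, a = i-1
      have hbi : b.val = i := by
        by_contra hne
        have hlt : b.val + 1 < m := by omega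
        exact hE hlt (by omega)
      have hai : a.val = i - 1 := by
        by_contra hne
        have hlt : a.val + 1 < m := by omega
        exact hS hlt (by omega)
      exact Or.inl ⟨hai, hbi⟩
    · -- in the rectangle: b = j, a = i
      have hbj : b.val = j := by
        by_contra hne
        have hlt : b.val + 1 < m := by omega
        exact hE hlt (by omega)
      have hai : a.val = i := by
        by_contra hne
        have hlt : a.val + 1 < m := by omega
        exact hS hlt (by omega)
      exact Or.inr ⟨hai, hbj⟩
  · rintro (⟨ha', hb'⟩ | ⟨ha', hb'⟩)
    · refine ⟨Or.inl (by omega), ?_, ?_⟩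
      · intro h hc; omega
      · intro h hc; omega
    · refine ⟨Or.inr (by omega), ?_, ?_⟩
      · intro h hc; omega
      · intro h hc; omega

lemma oddData_rk1 : Rk (oddData h1 h2 h3 h4).perm (i-1) i = 2*s := by
  apply Rk_eq_of_iff _ (i-1) i (2*s) (by omega)
  intro k
  rw [InvolData.apply]
  obtain ⟨v, hv, hd⟩ := fOdd_spec h1 h2 h3 h4 k.val k.isLt
  show (k.val ≤ i-1 ∧ fOdd i j s k.val ≤ i) ↔ k.val < 2*s
  rw [hv]
  omega

lemma oddData_rk2 : Rk (oddData h1 h2 h3 h4).perm i j = 2*s+1 := by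
  apply Rk_eq_of_iff _ i j (2*s+1) (by omega)
  intro k
  rw [InvolData.apply]
  obtain ⟨v, hv, hd⟩ := fOdd_spec h1 h2 h3 h4 k.val k.isLt
  show (k.val ≤ i ∧ fOdd i j s k.val ≤ j) ↔ k.val < 2*s+1
  rw [hv]
  omega

end OddCase

end BasicAux

/-- `𝒜ₑ`: fixed-point-free involutions with exactly one symplectic essential box,
whose rank condition is even. -/
def memAe {n : ℕ} (ι : Equiv.Perm (Fin (2*n))) : Prop :=
  isFPF ι ∧ ∃ p : Fin (2*n) × Fin (2*n),
    sympEssBox ι p.1 p.2 ∧ Even (rkm ι p.1 p.2) ∧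
    ∀ q : Fin (2*n) × Fin (2*n), sympEssBox ι q.1 q.2 → q = p

/-- `𝒜ₒ`: fixed-point-free involutions with exactly two symplectic essential boxes,
one at `(p, p+1)` with even rank condition `2r` and one in row `p+1` with rank
condition `2r+1`. -/
def memAo {n : ℕ} (ι : Equiv.Perm (Fin (2*n))) : Prop :=
  isFPF ι ∧ ∃ p q : Fin (2*n) × Fin (2*n), ∃ r : ℕ,
    p ≠ q ∧ sympEssBox ι p.1 p.2 ∧ sympEssBox ι q.1 q.2 ∧
    p.2.val = p.1.val + 1 ∧ rkm ι p.1 p.2 = 2*r ∧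
    q.1.val = p.1.val + 1 ∧ rkm ι q.1 q.2 = 2*r + 1 ∧
    ∀ s : Fin (2*n) × Fin (2*n), sympEssBox ι s.1 s.2 → s = p ∨ s = q

/-- `𝒜 = 𝒜ₑ ∪ 𝒜ₒ`. -/
def memA {n : ℕ} (ι : Equiv.Perm (Fin (2*n))) : Prop := memAe ι ∨ memAo ι

/-- every fixed-point-free involution `ι` is the greatest lower bound,
in the opposite Bruhat order, of the set `S = {ι' ∈ 𝒜 : ι ⪯ ι'}`; in particular `𝒜`
contains the basic elements of the poset. -/
theorem A_contains_basic_elements {n : ℕ} (ι : Equiv.Perm (Fin (2*n))) (hι : isFPF ι) :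
    (∀ ι' : Equiv.Perm (Fin (2*n)), memA ι' ∧ oppLE ι ι' → oppLE ι ι') ∧
    (∀ τ : Equiv.Perm (Fin (2*n)), isFPF τ →
      (∀ ι' : Equiv.Perm (Fin (2*n)), memA ι' ∧ oppLE ι ι' → oppLE τ ι') →
      oppLE τ ι) := by
  constructor
  · exact fun ι' h => h.2
  · intro τ hτ hS
    apply BasicAux.oppLE_of_ess hτ hι
    intro aF bF hbox
    have hιi := BasicAux.fpf_inv_eq hι
    have hcell := (BasicAux.inSympDiag_iff hιi aF bF).mp hbox.1
    have hC1 := BasicAux.box_le hι hbox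
    have hC2 := BasicAux.box_ge hι hbox
    have ham := aF.isLt
    have hbm := bF.isLt
    rw [BasicAux.rkm_eq_Rk, BasicAux.rkm_eq_Rk]
    rcases Nat.even_or_odd (BasicAux.Rk ι aF.val bF.val) with he | ho
    · -- even rank
      obtain ⟨s, hs⟩ := he
      have h1 : 2*s ≤ aF.val := by omega
      have h2 : aF.val < bF.val := hcell.1
      have h3 : bF.val + (aF.val - 2*s) + 2 ≤ 2*n := by omega
      have h4 : (2*n) % 2 = 0 := by omega
      set D := BasicAux.evenData h1 h2 h3 h4 with hD
      have hess := BasicAux.evenData_ess h1 h2 h3 h4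
      have hrkD := BasicAux.evenData_rk h1 h2 h3 h4
      have hmemA : memA D.perm := by
        left
        refine ⟨D.isFPF, ⟨(aF, bF), (hess aF bF).mpr ⟨rfl, rfl⟩, ?_, ?_⟩⟩
        · rw [BasicAux.rkm_eq_Rk, hrkD]
          exact ⟨s, by omega⟩
        · intro q hq
          have hq' := (hess q.1 q.2).mp hq
          exact Prod.ext (Fin.ext hq'.1) (Fin.ext hq'.2)
      have hle : oppLE ι D.perm := by
        apply BasicAux.oppLE_of_ess hι D.isFPF
        intro a b hb
        obtain ⟨ha', hb'⟩ := (hess a b).mp hb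
        rw [BasicAux.rkm_eq_Rk, BasicAux.rkm_eq_Rk, ha', hb', hrkD]
        omega
      have hτle := hS D.perm ⟨hmemA, hle⟩ aF bF
      rw [BasicAux.rkm_eq_Rk, BasicAux.rkm_eq_Rk, hrkD] at hτle
      omega
    · -- odd rank
      obtain ⟨s, hs⟩ := ho
      obtain ⟨hj2, hC3, hC3e⟩ := BasicAux.box_odd hι hbox (by omega)
      have h1 : 2*s+1 ≤ aF.val := by omega
      have h2 : aF.val + 2 ≤ bF.val := hj2
      have h3 : bF.val + (aF.val - 2*s) + 1 ≤ 2*n := by omega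
      have h4 : (2*n) % 2 = 0 := by omega
      set D := BasicAux.oddData h1 h2 h3 h4 with hD
      have hess := BasicAux.oddData_ess h1 h2 h3 h4
      have hrk1 := BasicAux.oddData_rk1 h1 h2 h3 h4
      have hrk2 := BasicAux.oddData_rk2 h1 h2 h3 h4
      set pF : Fin (2*n) := ⟨aF.val - 1, by omega⟩ with hpF
      have hpv : pF.val = aF.val - 1 := rfl
      have hmemA : memA D.perm := by
        right
        refine ⟨D.isFPF, ⟨(pF, aF), (aF, bF), s, ?_, ?_, ?_, ?_, ?_, ?_, ?_, ?_⟩⟩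
        · intro hcon
          have := congrArg (fun p => (Prod.fst p).val) hcon
          simp only [hpv] at this
          omega
        · exact (hess pF aF).mpr (Or.inl ⟨rfl, rfl⟩)
        · exact (hess aF bF).mpr (Or.inr ⟨rfl, rfl⟩)
        · show aF.val = pF.val + 1
          rw [hpv]; omega
        · show rkm D.perm pF aF = 2*s
          rw [BasicAux.rkm_eq_Rk, hpv, hrk1]
        · show aF.val = pF.val + 1
          rw [hpv]; omega
        · show rkm D.perm aF bF = 2*s + 1
          rw [BasicAux.rkm_eq_Rk, hrk2]
        · intro q hq
          rcases (hess q.1 q.2).mp hq with h | h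
          · left
            refine Prod.ext (Fin.ext ?_) (Fin.ext ?_)
            · show q.1.val = pF.val
              rw [hpv]; omega
            · show q.2.val = aF.val
              omega
          · right
            exact Prod.ext (Fin.ext h.1) (Fin.ext h.2)
      have hle : oppLE ι D.perm := by
        apply BasicAux.oppLE_of_ess hι D.isFPF
        intro a b hb
        rcases (hess a b).mp hb with ⟨ha', hb'⟩ | ⟨ha', hb'⟩
        · rw [BasicAux.rkm_eq_Rk, BasicAux.rkm_eq_Rk, ha', hb', hrk1]
          omega
        · rw [BasicAux.rkm_eq_Rk, BasicAux.rkm_eq_Rk, ha', hb', hrk2]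
          omega
      have hτle := hS D.perm ⟨hmemA, hle⟩ aF bF
      rw [BasicAux.rkm_eq_Rk, BasicAux.rkm_eq_Rk, hrk2] at hτle
      omega
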